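/- arXiv:1206.4737 — 4 statements merged into one kernel-verified Lean document; each statement's English description precedes it below -/
import Mathlib

section
/- Suppose |c(q,n)| \leq K for all n, where K \geq 1. Then for all |t| \geq 1 and all n \geq 0, |s_n(t)| \leq \prod_{k=0}^n (1+q^k) \cdot A_q(-K/|t|^2). -/
/-- The q-Airy function at a real argument:
`A_q(x) = ∑_{k≥0} q^{k²}(-x)^k/(q;q)_k`. -/
noncomputable def qAiryR (q x : ℝ) : ℝ :=
  ∑' k : ℕ, q ^ (k ^ 2) * (-x) ^ k / ∏ j ∈ Finset.range k, (1 - q ^ (j + 1))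

/-- The functions `s_n` defined by `s_{-1} = 0`, `s_0 = 1` and the recurrence
`(1 - qⁿ/t²) s_n(t) = s_{n+1}(q^{1/2} t) + t^{-2} c(q,n) s_{n-1}(q^{-1/2} t)`. -/
noncomputable def sFun (q : ℝ) (c : ℕ → ℂ) : ℕ → ℂ → ℂ
  | 0 => fun _ => 1
  | 1 => fun u => 1 - (q : ℂ) / u ^ 2
  | (n + 2) => fun u =>
      (1 - (q : ℂ) ^ (n + 2) / u ^ 2) * sFun q c (n + 1) (((Real.sqrt q : ℂ))⁻¹ * u)
        - (q : ℂ) / u ^ 2 * c (n + 1) * sFun q c n (((q : ℂ))⁻¹ * u)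

noncomputable def qAiryTerm (q x : ℝ) (k : ℕ) : ℝ :=
  q ^ (k ^ 2) * x ^ k / ∏ j ∈ Finset.range k, (1 - q ^ (j + 1))

lemma qAiryR_neg (q x : ℝ) : qAiryR q (-x) = ∑' k : ℕ, qAiryTerm q x k := by
  unfold qAiryR qAiryTerm
  simp

lemma qprod_pos {q : ℝ} (hq0 : 0 < q) (hq1 : q < 1) (k : ℕ) :
    0 < ∏ j ∈ Finset.range k, (1 - q ^ (j + 1)) := by
  apply Finset.prod_pos
  intro j _
  have : q ^ (j + 1) < 1 := pow_lt_one₀ hq0.le hq1 (Nat.succ_ne_zero j)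
  linarith

lemma qAiryTerm_nonneg {q x : ℝ} (hq0 : 0 < q) (hq1 : q < 1) (hx : 0 ≤ x) (k : ℕ) :
    0 ≤ qAiryTerm q x k :=
  div_nonneg (mul_nonneg (pow_nonneg hq0.le _) (pow_nonneg hx _)) (qprod_pos hq0 hq1 k).le

lemma qAiryTerm_succ {q : ℝ} (hq0 : 0 < q) (hq1 : q < 1) (x : ℝ) (k : ℕ) :
    qAiryTerm q x (k + 1) = (q ^ (2 * k + 1) * x / (1 - q ^ (k + 1))) * qAiryTerm q x k := by
  have hP : (∏ j ∈ Finset.range k, (1 - q ^ (j + 1))) ≠ 0 := (qprod_pos hq0 hq1 k).ne'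
  have hk1 : (1 : ℝ) - q ^ (k + 1) ≠ 0 := by
    have : q ^ (k + 1) < 1 := pow_lt_one₀ hq0.le hq1 (Nat.succ_ne_zero k)
    linarith
  unfold qAiryTerm
  rw [Finset.prod_range_succ]
  have h2 : (k + 1) ^ 2 = k ^ 2 + (2 * k + 1) := by ring
  rw [h2, pow_add, pow_succ]
  field_simp
  ring

lemma qAiryTerm_summable {q x : ℝ} (hq0 : 0 < q) (hq1 : q < 1) (hx : 0 ≤ x) :
    Summable (qAiryTerm q x) := by
  apply summable_of_ratio_norm_eventually_le (r := 1/2) (by norm_num)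
  have hC : Filter.Tendsto (fun k : ℕ => (q * x / (1 - q)) * q ^ k) Filter.atTop (nhds 0) := by
    have := (tendsto_pow_atTop_nhds_zero_of_lt_one hq0.le hq1).const_mul (q * x / (1 - q))
    simpa using this
  have hev : ∀ᶠ k : ℕ in Filter.atTop, (q * x / (1 - q)) * q ^ k ≤ 1/2 :=
    hC.eventually_le_const (by norm_num)
  filter_upwards [hev] with k hk
  have hratio : q ^ (2 * k + 1) * x / (1 - q ^ (k + 1)) ≤ (q * x / (1 - q)) * q ^ k := by
    have h1 : q ^ (2 * k + 1) * x ≤ q * x * q ^ k := by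
      have : q ^ (2 * k + 1) ≤ q * q ^ k := by
        have h := pow_le_pow_of_le_one hq0.le hq1.le (show k + 1 ≤ 2 * k + 1 by omega)
        calc q ^ (2 * k + 1) ≤ q ^ (k + 1) := h
          _ = q * q ^ k := by rw [pow_succ]; ring
      nlinarith [pow_nonneg hq0.le k, hq0.le, hx]
    have h2 : (0:ℝ) < 1 - q := by linarith
    have h3 : 1 - q ≤ 1 - q ^ (k + 1) := by
      have : q ^ (k + 1) ≤ q ^ 1 := pow_le_pow_of_le_one hq0.le hq1.le (by omega)
      simpa using by linarith [this]
    calc q ^ (2 * k + 1) * x / (1 - q ^ (k + 1)) ≤ (q * x * q ^ k) / (1 - q) := by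
          apply div_le_div₀ (by positivity) h1 h2 h3
      _ = (q * x / (1 - q)) * q ^ k := by ring
  have hterm := qAiryTerm_nonneg hq0 hq1 hx k
  have htermd := qAiryTerm_nonneg hq0 hq1 hx (k + 1)
  rw [Real.norm_eq_abs, Real.norm_eq_abs, abs_of_nonneg hterm, abs_of_nonneg htermd,
    qAiryTerm_succ hq0 hq1 x k]
  have : q ^ (2 * k + 1) * x / (1 - q ^ (k + 1)) ≤ 1/2 := hratio.trans hk
  exact mul_le_mul_of_nonneg_right this hterm

lemma qAiryS_one_le {q x : ℝ} (hq0 : 0 < q) (hq1 : q < 1) (hx : 0 ≤ x) :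
    1 ≤ ∑' k : ℕ, qAiryTerm q x k := by
  have h0 : qAiryTerm q x 0 = 1 := by unfold qAiryTerm; simp
  have := Summable.le_tsum (qAiryTerm_summable hq0 hq1 hx) 0
    (fun j _ => qAiryTerm_nonneg hq0 hq1 hx j)
  rwa [h0] at this

lemma qAiryS_mono {q x y : ℝ} (hq0 : 0 < q) (hq1 : q < 1) (hy : 0 ≤ y) (hxy : y ≤ x) :
    (∑' k : ℕ, qAiryTerm q y k) ≤ ∑' k : ℕ, qAiryTerm q x k := by
  have hx : 0 ≤ x := hy.trans hxy
  apply Summable.tsum_le_tsum _ (qAiryTerm_summable hq0 hq1 hy) (qAiryTerm_summable hq0 hq1 hx)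
  intro k
  unfold qAiryTerm
  have h2 := qprod_pos hq0 hq1 k
  rw [div_le_div_iff_of_pos_right h2]
  exact mul_le_mul_of_nonneg_left (pow_le_pow_left₀ hy hxy k) (pow_nonneg hq0.le _)

lemma qAiryS_funeq {q x : ℝ} (hq0 : 0 < q) (hq1 : q < 1) (hx : 0 ≤ x) :
    (∑' k : ℕ, qAiryTerm q x k) =
      (∑' k : ℕ, qAiryTerm q (q * x) k) + q * x * ∑' k : ℕ, qAiryTerm q (q ^ 2 * x) k := by
  have hqx : 0 ≤ q * x := mul_nonneg hq0.le hx
  have hq2x : 0 ≤ q ^ 2 * x := mul_nonneg (by positivity) hx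
  have hsx := qAiryTerm_summable hq0 hq1 hx
  have hsqx := qAiryTerm_summable hq0 hq1 hqx
  have hd : Summable (fun k => qAiryTerm q x k - qAiryTerm q (q * x) k) := hsx.sub hsqx
  have key : ∀ k : ℕ, qAiryTerm q x (k + 1) - qAiryTerm q (q * x) (k + 1)
      = q * x * qAiryTerm q (q ^ 2 * x) k := by
    intro k
    have hP : (∏ j ∈ Finset.range k, (1 - q ^ (j + 1))) ≠ 0 := (qprod_pos hq0 hq1 k).ne'
    have hk1 : (1 : ℝ) - q ^ (k + 1) ≠ 0 := by
      have : q ^ (k + 1) < 1 := pow_lt_one₀ hq0.le hq1 (Nat.succ_ne_zero k)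
      linarith
    unfold qAiryTerm
    rw [Finset.prod_range_succ]
    have h2 : (k + 1) ^ 2 = k ^ 2 + (2 * k + 1) := by ring
    rw [h2, pow_add]
    field_simp
    ring
  have step : (∑' k : ℕ, (qAiryTerm q x k - qAiryTerm q (q * x) k))
      = q * x * ∑' k : ℕ, qAiryTerm q (q ^ 2 * x) k := by
    rw [Summable.tsum_eq_zero_add hd]
    have h0 : qAiryTerm q x 0 - qAiryTerm q (q * x) 0 = 0 := by unfold qAiryTerm; simp
    rw [h0, zero_add]
    calc (∑' k : ℕ, (qAiryTerm q x (k + 1) - qAiryTerm q (q * x) (k + 1)))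
        = ∑' k : ℕ, q * x * qAiryTerm q (q ^ 2 * x) k := tsum_congr key
      _ = q * x * ∑' k : ℕ, qAiryTerm q (q ^ 2 * x) k := tsum_mul_left
  rw [Summable.tsum_sub hsx hsqx] at step
  linarith

lemma complexabs_sub_le (a b : ℂ) : ‖a - b‖ ≤ ‖a‖ + ‖b‖ := by
  exact norm_sub_le a b

lemma abs_one_sub_le (z : ℂ) : ‖1 - z‖ ≤ 1 + ‖z‖ := by
  have := complexabs_sub_le 1 z
  simpa using this

/-- if `|c(q,n)| ≤ K` for all `n`, with `K ≥ 1`, then for all `|t| ≥ 1`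
and all `n ≥ 0`, `|s_n(t)| ≤ ∏_{k=0}^n (1 + q^k) · A_q(-K/|t|²)`. -/
theorem sFun_bound (q : ℝ) (hq0 : 0 < q) (hq1 : q < 1) (K : ℝ) (hK : 1 ≤ K)
    (c : ℕ → ℂ) (hc : ∀ n, ‖c n‖ ≤ K) :
    ∀ t : ℂ, 1 ≤ ‖t‖ → ∀ n : ℕ,
      ‖sFun q c n t‖ ≤
        (∏ k ∈ Finset.range (n + 1), (1 + q ^ k)) * qAiryR q (-(K / ‖t‖ ^ 2)) := by
  have hK0 : (0:ℝ) < K := lt_of_lt_of_le one_pos hK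
  suffices H : ∀ n : ℕ, ∀ t : ℂ, 1 ≤ ‖t‖ →
      ‖sFun q c n t‖ ≤
        (∏ k ∈ Finset.range (n + 1), (1 + q ^ k)) * qAiryR q (-(K / (‖t‖) ^ 2)) by
    intro t ht n; exact H n t ht
  intro n
  induction n using Nat.twoStepInduction with
  | zero =>
    intro t ht
    have ht0 : (0:ℝ) < ‖t‖ := lt_of_lt_of_le one_pos ht
    have hx : 0 ≤ K / (‖t‖) ^ 2 := by positivity
    rw [qAiryR_neg]
    have h1 := qAiryS_one_le hq0 hq1 hx
    have hs : ‖sFun q c 0 t‖ = 1 := by simp [sFun]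
    rw [hs]
    have h2 : (∏ k ∈ Finset.range 1, (1 + q ^ k)) = 2 := by norm_num
    rw [h2]; linarith
  | one =>
    intro t ht
    have ht0 : (0:ℝ) < ‖t‖ := lt_of_lt_of_le one_pos ht
    have hx : 0 ≤ K / (‖t‖) ^ 2 := by positivity
    rw [qAiryR_neg]
    have h1 := qAiryS_one_le hq0 hq1 hx
    have ht2 : (1:ℝ) ≤ (‖t‖) ^ 2 := by nlinarith
    have habs : ‖sFun q c 1 t‖ ≤ 1 + q := by
      show ‖1 - (q:ℂ)/t^2‖ ≤ 1 + q
      refine (abs_one_sub_le _).trans ?_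
      have e : ‖(q:ℂ)/t^2‖ = q / (‖t‖) ^ 2 := by
        rw [norm_div, norm_pow, Complex.norm_real, Real.norm_eq_abs, abs_of_pos hq0]
      rw [e]
      have := div_le_self hq0.le ht2
      linarith
    have hP : (∏ k ∈ Finset.range 2, (1 + q ^ k)) = 2 * (1 + q) := by
      rw [Finset.prod_range_succ, Finset.prod_range_one]; norm_num
    rw [hP]
    nlinarith [habs, h1]
  | more n ih ih1 =>
    intro t ht
    have ht0 : (0:ℝ) < ‖t‖ := lt_of_lt_of_le one_pos ht
    have ht2 : (1:ℝ) ≤ (‖t‖) ^ 2 := by nlinarith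
    set x : ℝ := K / (‖t‖) ^ 2 with hxdef
    have hx : 0 ≤ x := by positivity
    have hsq : (0:ℝ) < Real.sqrt q := Real.sqrt_pos.mpr hq0
    have hsq1 : Real.sqrt q ≤ 1 := by
      rw [show (1:ℝ) = Real.sqrt 1 by simp]
      exact Real.sqrt_le_sqrt hq1.le
    -- the two evaluation points
    set u1 : ℂ := ((Real.sqrt q : ℂ))⁻¹ * t with hu1def
    set u2 : ℂ := ((q : ℂ))⁻¹ * t with hu2def
    have hau1 : ‖u1‖ = (Real.sqrt q)⁻¹ * ‖t‖ := by
      rw [hu1def, norm_mul, norm_inv, Complex.norm_real, Real.norm_eq_abs, abs_of_pos hsq]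
    have hau2 : ‖u2‖ = q⁻¹ * ‖t‖ := by
      rw [hu2def, norm_mul, norm_inv, Complex.norm_real, Real.norm_eq_abs, abs_of_pos hq0]
    have hu1ge : 1 ≤ ‖u1‖ := by
      rw [hau1]
      calc (1:ℝ) ≤ ‖t‖ := ht
        _ = 1 * ‖t‖ := by ring
        _ ≤ (Real.sqrt q)⁻¹ * ‖t‖ := by
            gcongr
            exact (one_le_inv₀ hsq).mpr hsq1
    have hu2ge : 1 ≤ ‖u2‖ := by
      rw [hau2]
      calc (1:ℝ) ≤ ‖t‖ := ht
        _ = 1 * ‖t‖ := by ring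
        _ ≤ q⁻¹ * ‖t‖ := by
            gcongr
            exact (one_le_inv₀ hq0).mpr hq1.le
    have hx1 : K / (‖u1‖) ^ 2 = q * x := by
      rw [hau1, hxdef]
      rw [mul_pow]
      have : ((Real.sqrt q)⁻¹) ^ 2 = q⁻¹ := by
        rw [inv_pow, Real.sq_sqrt hq0.le]
      rw [this]
      field_simp
    have hx2 : K / (‖u2‖) ^ 2 = q ^ 2 * x := by
      rw [hau2, hxdef, mul_pow, inv_pow]
      field_simp
    -- bounds from induction hypotheses
    have b1 := ih1 u1 hu1ge
    have b0 := ih u2 hu2ge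
    rw [qAiryR_neg, hx1] at b1
    rw [qAiryR_neg, hx2] at b0
    rw [qAiryR_neg]
    set S0 : ℝ := ∑' k : ℕ, qAiryTerm q x k with hS0
    set S1 : ℝ := ∑' k : ℕ, qAiryTerm q (q * x) k with hS1
    set S2 : ℝ := ∑' k : ℕ, qAiryTerm q (q ^ 2 * x) k with hS2
    have hfun : S0 = S1 + q * x * S2 := qAiryS_funeq hq0 hq1 hx
    have hS1pos : (1:ℝ) ≤ S1 := qAiryS_one_le hq0 hq1 (by positivity)
    have hS2pos : (1:ℝ) ≤ S2 := qAiryS_one_le hq0 hq1 (by positivity)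
    have hS1S0 : S1 ≤ S0 := qAiryS_mono hq0 hq1 (by positivity) (by nlinarith)
    set P : ℕ → ℝ := fun m => ∏ k ∈ Finset.range (m + 1), (1 + q ^ k) with hP
    have hPpos : ∀ m, (0:ℝ) < P m := by
      intro m; apply Finset.prod_pos; intro k _; positivity
    have hPsucc : ∀ m, P (m + 1) = P m * (1 + q ^ (m + 1)) := by
      intro m; rw [hP]; exact Finset.prod_range_succ _ _
    have hPmono : P n ≤ P (n + 1) := by
      rw [hPsucc]
      nlinarith [hPpos n, pow_nonneg hq0.le (n+1)]
    -- estimate the recurrence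
    have hrec : ‖sFun q c (n + 2) t‖ ≤
        (1 + q ^ (n + 2)) * (P (n+1) * S1) + (q * x) * (P n * S2) := by
      have hunf : sFun q c (n + 2) t = (1 - (q : ℂ) ^ (n + 2) / t ^ 2) * sFun q c (n + 1) u1
          - (q : ℂ) / t ^ 2 * c (n + 1) * sFun q c n u2 := by
        simp only [sFun, hu1def, hu2def]
      rw [hunf]
      refine (complexabs_sub_le _ _).trans ?_
      rw [norm_mul, norm_mul, norm_mul]
      have h1 : ‖1 - (q : ℂ) ^ (n + 2) / t ^ 2‖ ≤ 1 + q ^ (n + 2) := by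
        refine (abs_one_sub_le _).trans ?_
        have e : ‖(q : ℂ) ^ (n + 2) / t ^ 2‖ = q ^ (n + 2) / (‖t‖) ^ 2 := by
          rw [norm_div, norm_pow, norm_pow, Complex.norm_real, Real.norm_eq_abs, abs_of_pos hq0]
        rw [e]
        have := div_le_self (by positivity : (0:ℝ) ≤ q ^ (n + 2)) ht2
        linarith
      have h2 : ‖(q : ℂ) / t ^ 2‖ * ‖c (n + 1)‖ ≤ q * x := by
        have e : ‖(q : ℂ) / t ^ 2‖ = q / (‖t‖) ^ 2 := by
          rw [norm_div, norm_pow, Complex.norm_real, Real.norm_eq_abs, abs_of_pos hq0]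
        rw [e]
        have hcn := hc (n + 1)
        have hd : (0:ℝ) ≤ q / (‖t‖) ^ 2 := by positivity
        calc q / (‖t‖) ^ 2 * ‖c (n + 1)‖
            ≤ q / (‖t‖) ^ 2 * K :=
              mul_le_mul_of_nonneg_left hcn hd
          _ = q * x := by rw [hxdef]; ring
      have habs1 : (0:ℝ) ≤ ‖sFun q c (n + 1) u1‖ := norm_nonneg _
      have habs0 : (0:ℝ) ≤ ‖sFun q c n u2‖ := norm_nonneg _
      have e1 : ‖1 - (q : ℂ) ^ (n + 2) / t ^ 2‖
          * ‖sFun q c (n + 1) u1‖ ≤ (1 + q ^ (n + 2)) * (P (n+1) * S1) :=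
        mul_le_mul h1 b1 habs1 (by positivity)
      have e2 : ‖(q : ℂ) / t ^ 2‖ * ‖c (n + 1)‖
          * ‖sFun q c n u2‖ ≤ (q * x) * (P n * S2) :=
        mul_le_mul h2 b0 habs0 (by positivity)
      linarith
    -- final arithmetic
    have final : (1 + q ^ (n + 2)) * (P (n+1) * S1) + (q * x) * (P n * S2)
        ≤ P (n + 2) * S0 := by
      have h1 : (q * x) * (P n * S2) ≤ (q * x) * (P (n+1) * S2) := by
        apply mul_le_mul_of_nonneg_left _ (by positivity)
        apply mul_le_mul_of_nonneg_right hPmono (by linarith)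
      have h2 : (1 + q ^ (n + 2)) * (P (n+1) * S1) + (q * x) * (P (n+1) * S2)
          = P (n+1) * (S0 + q ^ (n + 2) * S1) := by
        rw [hfun]; ring
      have h3 : P (n+1) * (S0 + q ^ (n + 2) * S1) ≤ P (n+1) * ((1 + q ^ (n + 2)) * S0) := by
        apply mul_le_mul_of_nonneg_left _ (hPpos (n+1)).le
        have : q ^ (n + 2) * S1 ≤ q ^ (n + 2) * S0 :=
          mul_le_mul_of_nonneg_left hS1S0 (by positivity)
        linarith
      have h4 : P (n+1) * ((1 + q ^ (n + 2)) * S0) = P (n + 2) * S0 := by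
        rw [hPsucc (n+1)]; ring
      linarith
    exact hrec.trans final
end

section
/- Suppose a doubly-indexed bounded family a_{n,k} (|a_{n,k}| \leq M) satisfies a_{n+1,k} - a_{n+l+1,k} = q^k(a_{n,k} - a_{n+l,k}) - q^{n+k}(a_{n,k-1} - q^l a_{n+l,k-1}) - q^{2k-1}[c(q,n)a_{n-1,k-1} - c(q,n+l)a_{n+l-1,k-1}] for all large n and all l \geq 0, where c(q,n) \to 1 and for fixed k-1 the sequence (a_{n,k-1})_n converges. Then for fixed k \geq 1 the sequence (a_{n,k})_n is Cauchy, hence converges. -/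
open Filter

/-- the inductive Cauchy-sequence step in the proof of Theorem 2.1.
If a bounded doubly-indexed family `a_{n,k}` satisfies the stated difference relation
for all large `n` and all `l ≥ 0`, where `c(q,n) → 1` and `(a_{n,k-1})_n` converges,
then for fixed `k ≥ 1` the sequence `(a_{n,k})_n` is Cauchy, hence converges. -/
theorem cauchy_step (q : ℝ) (hq0 : 0 < q) (hq1 : q < 1) (M : ℝ) (hM : 0 < M)
    (c : ℕ → ℂ) (hc : Tendsto c atTop (nhds 1))
    (a : ℕ → ℕ → ℂ) (hbound : ∀ n k : ℕ, ‖a n k‖ ≤ M)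
    (k : ℕ) (hk : 1 ≤ k)
    (hprev : ∃ L : ℂ, Tendsto (fun n => a n (k - 1)) atTop (nhds L))
    (N₀ : ℕ) (hN₀ : 1 ≤ N₀)
    (hrel : ∀ n : ℕ, N₀ ≤ n → ∀ l : ℕ,
      a (n + 1) k - a (n + l + 1) k
        = (q : ℂ) ^ k * (a n k - a (n + l) k)
          - (q : ℂ) ^ (n + k) * (a n (k - 1) - (q : ℂ) ^ l * a (n + l) (k - 1))
          - (q : ℂ) ^ (2 * k - 1)
              * (c n * a (n - 1) (k - 1) - c (n + l) * a (n + l - 1) (k - 1))) :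
    CauchySeq (fun n => a n k) := by
  obtain ⟨L, hL⟩ := hprev
  set r : ℝ := q ^ k with hr
  have hr0 : 0 ≤ r := by positivity
  have hr1 : r < 1 := pow_lt_one₀ hq0.le hq1 (by omega)
  -- convergence of g n = c n * a (n-1) (k-1)
  have hsub : Tendsto (fun n : ℕ => n - 1) atTop atTop := tendsto_sub_atTop_nat 1
  have hg : Tendsto (fun n => c n * a (n - 1) (k - 1)) atTop (nhds L) := by
    have := hc.mul (hL.comp hsub)
    rwa [one_mul] at this
  -- basic bound |b n l| ≤ 2M
  have hb2M : ∀ n l : ℕ, norm (a n k - a (n + l) k) ≤ 2 * M := by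
    intro n l
    calc norm (a n k - a (n + l) k)
        ≤ norm (a n k) + norm (a (n + l) k) := by
          exact (norm_sub_le _ _)
      _ ≤ M + M := add_le_add (hbound _ _) (hbound _ _)
      _ = 2 * M := by ring
  -- step estimate
  have hstep : ∀ ε : ℝ, 0 < ε → ∃ N : ℕ, N₀ ≤ N ∧ ∀ n, N ≤ n → ∀ l,
      norm (a (n + 1) k - a (n + l + 1) k)
        ≤ r * norm (a n k - a (n + l) k) + ε := by
    intro ε hε
    have h1 : Tendsto (fun n : ℕ => q ^ n * (2 * M)) atTop (nhds 0) := by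
      have := (tendsto_pow_atTop_nhds_zero_of_lt_one hq0.le hq1).mul_const (2 * M)
      simpa using this
    obtain ⟨N₁, hN₁⟩ := (Metric.tendsto_atTop.1 h1) (ε / 2) (by linarith)
    obtain ⟨N₂, hN₂⟩ := (Metric.tendsto_atTop.1 hg) (ε / 4) (by linarith)
    refine ⟨max N₀ (max N₁ N₂), le_max_left _ _, ?_⟩
    intro n hn l
    have hnN₀ : N₀ ≤ n := le_trans (le_max_left _ _) hn
    have hnN₁ : N₁ ≤ n := le_trans (le_trans (le_max_left _ _) (le_max_right _ _)) hn
    have hnN₂ : N₂ ≤ n := le_trans (le_trans (le_max_right _ _) (le_max_right _ _)) hn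
    rw [hrel n hnN₀ l]
    have hX : norm ((q : ℂ) ^ (n + k) * (a n (k - 1) - (q : ℂ) ^ l * a (n + l) (k - 1)))
        ≤ ε / 2 := by
      rw [norm_mul]
      have h1' : norm ((q : ℂ) ^ (n + k)) = q ^ (n + k) := by
        rw [← Complex.ofReal_pow, Complex.norm_real, Real.norm_eq_abs, abs_of_pos (by positivity)]
      have h2' : norm (a n (k - 1) - (q : ℂ) ^ l * a (n + l) (k - 1)) ≤ 2 * M := by
        calc norm (a n (k - 1) - (q : ℂ) ^ l * a (n + l) (k - 1))
            ≤ norm (a n (k - 1)) + norm ((q : ℂ) ^ l * a (n + l) (k - 1)) :=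
              norm_sub_le _ _
          _ ≤ M + 1 * M := by
              refine add_le_add (hbound _ _) ?_
              rw [norm_mul]
              refine mul_le_mul ?_ (hbound _ _) (norm_nonneg _) zero_le_one
              rw [← Complex.ofReal_pow, Complex.norm_real, Real.norm_eq_abs, abs_of_pos (by positivity)]
              exact pow_le_one₀ hq0.le hq1.le
          _ = 2 * M := by ring
      have hqnk : q ^ (n + k) ≤ q ^ n := by
        rw [pow_add]
        nlinarith [pow_le_one₀ hq0.le hq1.le (n:=k), pow_pos hq0 n, pow_nonneg hq0.le k]
      have hdist := hN₁ n hnN₁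
      rw [Real.dist_eq, sub_zero, abs_of_pos (by positivity)] at hdist
      calc norm ((q : ℂ) ^ (n + k)) * norm (a n (k - 1) - (q : ℂ) ^ l * a (n + l) (k - 1))
          ≤ q ^ n * (2 * M) := by
            rw [h1']
            exact mul_le_mul hqnk h2' (norm_nonneg _) (by positivity)
        _ ≤ ε / 2 := hdist.le
    have hY : norm ((q : ℂ) ^ (2 * k - 1)
        * (c n * a (n - 1) (k - 1) - c (n + l) * a (n + l - 1) (k - 1))) ≤ ε / 2 := by
      rw [norm_mul]
      have h1' : norm ((q : ℂ) ^ (2 * k - 1)) ≤ 1 := by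
        rw [← Complex.ofReal_pow, Complex.norm_real, Real.norm_eq_abs, abs_of_pos (by positivity)]
        exact pow_le_one₀ hq0.le hq1.le
      have h2' : norm (c n * a (n - 1) (k - 1) - c (n + l) * a (n + l - 1) (k - 1))
          ≤ ε / 2 := by
        have d1 := hN₂ n hnN₂
        have d2 := hN₂ (n + l) (le_trans hnN₂ (Nat.le_add_right _ _))
        rw [Complex.dist_eq] at d1 d2
        calc norm (c n * a (n - 1) (k - 1) - c (n + l) * a (n + l - 1) (k - 1))
            = norm ((c n * a (n - 1) (k - 1) - L) - (c (n + l) * a (n + l - 1) (k - 1) - L)) := by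
              ring_nf
          _ ≤ norm (c n * a (n - 1) (k - 1) - L)
              + norm (c (n + l) * a (n + l - 1) (k - 1) - L) := norm_sub_le _ _
          _ ≤ ε / 4 + ε / 4 := add_le_add d1.le d2.le
          _ = ε / 2 := by ring
      calc norm ((q : ℂ) ^ (2 * k - 1))
            * norm (c n * a (n - 1) (k - 1) - c (n + l) * a (n + l - 1) (k - 1))
          ≤ 1 * (ε / 2) := mul_le_mul h1' h2' (norm_nonneg _) zero_le_one
        _ = ε / 2 := one_mul _
    calc norm ((q : ℂ) ^ k * (a n k - a (n + l) k)
          - (q : ℂ) ^ (n + k) * (a n (k - 1) - (q : ℂ) ^ l * a (n + l) (k - 1))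
          - (q : ℂ) ^ (2 * k - 1)
              * (c n * a (n - 1) (k - 1) - c (n + l) * a (n + l - 1) (k - 1)))
        ≤ norm ((q : ℂ) ^ k * (a n k - a (n + l) k)
            - (q : ℂ) ^ (n + k) * (a n (k - 1) - (q : ℂ) ^ l * a (n + l) (k - 1)))
          + norm ((q : ℂ) ^ (2 * k - 1)
              * (c n * a (n - 1) (k - 1) - c (n + l) * a (n + l - 1) (k - 1))) := norm_sub_le _ _
      _ ≤ (norm ((q : ℂ) ^ k * (a n k - a (n + l) k))
            + norm ((q : ℂ) ^ (n + k) * (a n (k - 1) - (q : ℂ) ^ l * a (n + l) (k - 1))))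
          + ε / 2 := add_le_add (norm_sub_le _ _) hY
      _ ≤ (r * norm (a n k - a (n + l) k) + ε / 2) + ε / 2 := by
          refine add_le_add (add_le_add ?_ hX) le_rfl
          rw [norm_mul, ← Complex.ofReal_pow, Complex.norm_real, Real.norm_eq_abs, abs_of_pos (by positivity)]
      _ = r * norm (a n k - a (n + l) k) + ε := by ring
  -- Cauchy
  rw [Metric.cauchySeq_iff']
  intro ε hε
  set ε' : ℝ := ε * (1 - r) / 2 with hε'
  have hε'pos : 0 < ε' := by
    have : 0 < 1 - r := by linarith
    positivity
  obtain ⟨N, hNN₀, hN⟩ := hstep ε' hε'pos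
  have key : ∀ m l : ℕ, norm (a (N + m) k - a (N + m + l) k)
      ≤ r ^ m * (2 * M) + ε / 2 := by
    intro m
    induction m with
    | zero =>
      intro l
      have := hb2M N l
      simpa using le_trans this (by linarith)
    | succ m ih =>
      intro l
      have h1 := hN (N + m) (Nat.le_add_right _ _) l
      have h2 := ih l
      have hrecast : a (N + (m + 1)) k - a (N + (m + 1) + l) k
          = a (N + m + 1) k - a (N + m + l + 1) k := by
        congr 2 <;> omega
      rw [hrecast]
      have hε'eq : r * (ε / 2) + ε' = ε / 2 := by
        rw [hε']; ring
      calc norm (a (N + m + 1) k - a (N + m + l + 1) k)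
          ≤ r * norm (a (N + m) k - a (N + m + l) k) + ε' := h1
        _ ≤ r * (r ^ m * (2 * M) + ε / 2) + ε' := by nlinarith
        _ = r ^ (m + 1) * (2 * M) + (r * (ε / 2) + ε') := by ring
        _ = r ^ (m + 1) * (2 * M) + ε / 2 := by rw [hε'eq]
  have hpow : Tendsto (fun m : ℕ => r ^ m * (2 * M)) atTop (nhds 0) := by
    have := (tendsto_pow_atTop_nhds_zero_of_lt_one hr0 hr1).mul_const (2 * M)
    simpa using this
  obtain ⟨m₀, hm₀⟩ := (Metric.tendsto_atTop.1 hpow) (ε / 2) (by linarith)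
  refine ⟨N + m₀, ?_⟩
  intro n hn
  have hd := hm₀ m₀ le_rfl
  rw [Real.dist_eq, sub_zero, abs_of_nonneg (by positivity)] at hd
  have hl : n = N + m₀ + (n - (N + m₀)) := by omega
  have hkey := key m₀ (n - (N + m₀))
  rw [dist_comm, Complex.dist_eq]
  calc norm (a (N + m₀) k - a n k)
      = norm (a (N + m₀) k - a (N + m₀ + (n - (N + m₀))) k) := by rw [← hl]
    _ ≤ r ^ m₀ * (2 * M) + ε / 2 := hkey
    _ < ε / 2 + ε / 2 := by linarith
    _ = ε := by ring
end

section
/- For every complex s, the function F_q(z;s) = e^{i\pi s} \sum_{n=-\infty}^{\infty} (-1)^n q^{(n+s)^2} z^{n+s} / (q;q)_{n+s} satisfies the q-difference equation y(z) - y(qz) + q z y(q^2 z) = 0 (for z in a domain where z^s is defined, e.g., the cut plane). -/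
/-- The infinite q-Pochhammer product `(a;q)_∞ = ∏_{n≥0} (1 - a qⁿ)`. -/
noncomputable def qPochInf (q : ℝ) (a : ℂ) : ℂ := ∏' n : ℕ, (1 - a * (q : ℂ) ^ n)

/-- The one-parameter family
`F_q(z;s) = e^{iπs} ∑_{n∈ℤ} (-1)ⁿ q^{(n+s)²} z^{n+s} / (q;q)_{n+s}`, where
`1/(q;q)_{n+s} = (q^{n+s+1};q)_∞ / (q;q)_∞` and complex powers are principal. -/
noncomputable def Fq (q : ℝ) (z s : ℂ) : ℂ :=
  Complex.exp (Real.pi * Complex.I * s) *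
    ∑' n : ℤ, (-1 : ℂ) ^ n * (q : ℂ) ^ (((n : ℂ) + s) ^ 2) * z ^ ((n : ℂ) + s)
      * qPochInf q ((q : ℂ) ^ ((n : ℂ) + s + 1)) / qPochInf q (q : ℂ)

open Filter Topology

lemma multipliable_qPoch {q : ℝ} (hq0 : 0 < q) (hq1 : q < 1) (a : ℂ) :
    Multipliable (fun n : ℕ => 1 - a * (q : ℂ) ^ n) := by
  by_cases hzero : ∃ n : ℕ, 1 - a * (q : ℂ) ^ n = 0
  · obtain ⟨n, hn⟩ := hzero
    refine ⟨0, ?_⟩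
    rw [HasProd]
    refine Tendsto.congr' ?_ tendsto_const_nhds
    filter_upwards [Filter.eventually_ge_atTop ({n} : Finset ℕ)] with s hs
    exact (Finset.prod_eq_zero (hs (Finset.mem_singleton_self n)) hn).symm
  · push_neg at hzero
    have hlog : Summable (fun n : ℕ => Complex.log (1 - a * (q : ℂ) ^ n)) := by
      have hgeo : Summable (fun n : ℕ => (3/2) * (‖a‖ * q ^ n)) :=
        ((summable_geometric_of_lt_one hq0.le hq1).mul_left _).mul_left _
      refine hgeo.of_norm_bounded_eventually_nat ?_
      have htend : Tendsto (fun n : ℕ => ‖a‖ * q ^ n) atTop (𝓝 0) := by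
        simpa using (tendsto_pow_atTop_nhds_zero_of_lt_one hq0.le hq1).const_mul ‖a‖
      filter_upwards [htend.eventually (eventually_le_nhds (by norm_num : (0:ℝ) < 1/2))]
        with n hn
      have h1 : ‖-(a * (q : ℂ) ^ n)‖ ≤ 1/2 := by
        simpa [abs_of_pos hq0] using hn
      have := Complex.norm_log_one_add_half_le_self h1
      rw [show (1 : ℂ) + -(a * (q:ℂ)^n) = 1 - a * (q:ℂ)^n by ring] at this
      refine this.trans ?_
      rw [norm_neg]; simp [abs_of_pos hq0]
    exact Complex.multipliable_of_summable_log hlog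

set_option maxHeartbeats 1000000 in
lemma qPochInf_rec {q : ℝ} (hq0 : 0 < q) (hq1 : q < 1) (a : ℂ) :
    qPochInf q a = (1 - a) * qPochInf q (a * (q : ℂ)) := by
  have h1 : Multipliable (fun n : ℕ => 1 - a * (q : ℂ) ^ (n + 1)) :=
    (multipliable_qPoch hq0 hq1 (a * (q : ℂ))).congr fun n => by rw [pow_succ']; ring
  rw [qPochInf, tprod_eq_zero_mul' h1]
  simp only [pow_zero, mul_one]
  congr 1
  rw [qPochInf]
  exact tprod_congr fun n => by ring

lemma cpow_pos_mul {q : ℝ} (hq0 : 0 < q) {x : ℂ} (hx : x ≠ 0) (c : ℂ) :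
    ((q : ℂ) * x) ^ c = (q : ℂ) ^ c * x ^ c := by
  have hq : (q : ℂ) ≠ 0 := Complex.ofReal_ne_zero.mpr hq0.ne'
  rw [Complex.cpow_def_of_ne_zero (mul_ne_zero hq hx),
    Complex.cpow_def_of_ne_zero hq, Complex.cpow_def_of_ne_zero hx,
    Complex.log_ofReal_mul hq0 hx, add_mul, Complex.exp_add,
    Complex.ofReal_log hq0.le]

noncomputable def qTerm (q : ℝ) (z s : ℂ) (n : ℤ) : ℂ :=
  (-1 : ℂ) ^ n * (q : ℂ) ^ (((n : ℂ) + s) ^ 2) * z ^ ((n : ℂ) + s)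
    * qPochInf q ((q : ℂ) ^ ((n : ℂ) + s + 1))

lemma qTerm_succ {q : ℝ} (hq0 : 0 < q) (hq1 : q < 1) {z : ℂ} (hz : z ≠ 0) (s : ℂ) (n : ℤ) :
    qTerm q z s (n + 1) * (1 - (q : ℂ) ^ ((n : ℂ) + s + 1))
      = -(q : ℂ) ^ (2 * ((n : ℂ) + s) + 1) * z * qTerm q z s n := by
  have hq : (q : ℂ) ≠ 0 := Complex.ofReal_ne_zero.mpr hq0.ne'
  have hneg : ((-1 : ℂ)) ^ (n + 1) = (-1 : ℂ) ^ n * (-1) := zpow_add_one₀ (by norm_num) n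
  have hcast : (((n + 1 : ℤ) : ℂ)) = (n : ℂ) + 1 := by push_cast; ring
  have hQ2 : (q : ℂ) ^ ((((n : ℂ) + 1) + s) ^ 2)
      = (q : ℂ) ^ (((n : ℂ) + s) ^ 2) * (q : ℂ) ^ (2 * ((n : ℂ) + s) + 1) := by
    rw [← Complex.cpow_add _ _ hq]; ring_nf
  have hZ : z ^ (((n : ℂ) + 1) + s) = z ^ ((n : ℂ) + s) * z := by
    rw [show ((n : ℂ) + 1) + s = ((n : ℂ) + s) + 1 by ring, Complex.cpow_add _ _ hz,
      Complex.cpow_one]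
  have hP : (1 - (q : ℂ) ^ ((n : ℂ) + s + 1)) * qPochInf q ((q : ℂ) ^ ((n : ℂ) + 1 + s + 1))
      = qPochInf q ((q : ℂ) ^ ((n : ℂ) + s + 1)) := by
    rw [qPochInf_rec hq0 hq1 ((q : ℂ) ^ ((n : ℂ) + s + 1))]
    congr 2
    rw [show (n : ℂ) + 1 + s + 1 = ((n : ℂ) + s + 1) + 1 by ring, Complex.cpow_add _ _ hq,
      Complex.cpow_one]
  rw [qTerm, qTerm, hcast, hneg, hQ2, hZ]
  calc (-1 : ℂ) ^ n * (-1) * ((q:ℂ) ^ (((n:ℂ) + s) ^ 2) * (q:ℂ) ^ (2 * ((n:ℂ) + s) + 1)) *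
        (z ^ ((n:ℂ) + s) * z) * qPochInf q ((q:ℂ) ^ ((n:ℂ) + 1 + s + 1)) *
        (1 - (q:ℂ) ^ ((n:ℂ) + s + 1))
      = -(q:ℂ) ^ (2 * ((n:ℂ) + s) + 1) * z *
        ((-1:ℂ) ^ n * (q:ℂ) ^ (((n:ℂ) + s) ^ 2) * z ^ ((n:ℂ) + s)) *
        ((1 - (q:ℂ) ^ ((n:ℂ) + s + 1)) * qPochInf q ((q:ℂ) ^ ((n:ℂ) + 1 + s + 1))) := by ring
    _ = _ := by rw [hP]; ring

lemma norm_cpow_real {q : ℝ} (hq0 : 0 < q) (c : ℂ) : ‖(q : ℂ) ^ c‖ = q ^ c.re := by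
  rw [Complex.norm_cpow_eq_rpow_re_of_pos hq0]

lemma norm_one_sub_q_le {q : ℝ} (hq0 : 0 < q) (s : ℂ) (n : ℤ) :
    ‖1 - (q : ℂ) ^ ((n : ℂ) + s + 1)‖ ≤ 1 + q ^ ((n : ℝ) + s.re + 1) := by
  have hre : (((n : ℤ) : ℂ) + s + 1).re = (n : ℝ) + s.re + 1 := by simp
  refine (norm_sub_le _ _).trans (le_of_eq ?_)
  rw [norm_one, norm_cpow_real hq0, hre]

lemma norm_one_sub_q_ge {q : ℝ} (hq0 : 0 < q) (s : ℂ) (n : ℤ) :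
    1 - q ^ ((n : ℝ) + s.re + 1) ≤ ‖1 - (q : ℂ) ^ ((n : ℂ) + s + 1)‖ := by
  have hre : (((n : ℤ) : ℂ) + s + 1).re = (n : ℝ) + s.re + 1 := by simp
  have := norm_sub_norm_le (1 : ℂ) ((q : ℂ) ^ ((n : ℂ) + s + 1))
  rw [norm_one, norm_cpow_real hq0, hre] at this
  exact this

lemma qTerm_norm_succ {q : ℝ} (hq0 : 0 < q) (hq1 : q < 1) {z : ℂ} (hz : z ≠ 0) (s : ℂ) (n : ℤ) :
    ‖qTerm q z s (n + 1)‖ * ‖1 - (q : ℂ) ^ ((n : ℂ) + s + 1)‖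
      = q ^ (2 * (n : ℝ) + 2 * s.re + 1) * ‖z‖ * ‖qTerm q z s n‖ := by
  have := congrArg norm (qTerm_succ hq0 hq1 hz s n)
  rw [norm_mul, norm_mul, norm_mul, norm_neg, norm_cpow_real hq0] at this
  convert this using 3
  simp
  ring

/-- `q ^ (k + c) → 0` as `k → ∞` (base `0 < q < 1`). -/
lemma rpow_lin_tendsto {q : ℝ} (hq0 : 0 < q) (hq1 : q < 1) (c : ℝ) :
    Tendsto (fun k : ℕ => q ^ ((k : ℝ) + c)) atTop (𝓝 0) := by
  have h : ∀ k : ℕ, q ^ ((k : ℝ) + c) = q ^ c * q ^ k := fun k => by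
    rw [Real.rpow_add hq0, Real.rpow_natCast, mul_comm]
  simp only [h]
  simpa using (tendsto_pow_atTop_nhds_zero_of_lt_one hq0.le hq1).const_mul (q ^ c)

lemma qTerm_summable {q : ℝ} (hq0 : 0 < q) (hq1 : q < 1) {z : ℂ} (hz : z ≠ 0) (s : ℂ) :
    Summable (qTerm q z s) := by
  have hznorm : 0 < ‖z‖ := norm_pos_iff.mpr hz
  refine Summable.of_nat_of_neg_add_one ?_ ?_
  · -- positive side, ratio test
    refine summable_of_ratio_norm_eventually_le (r := 1/2) (by norm_num) ?_
    have h1 := (rpow_lin_tendsto hq0 hq1 (s.re + 1)).eventually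
      (eventually_le_nhds (by norm_num : (0:ℝ) < 1/2))
    have h2t : Tendsto (fun k : ℕ => ‖z‖ * q ^ (2*(k : ℝ) + 2*s.re + 1)) atTop (𝓝 0) := by
      have heq : ∀ k : ℕ, ‖z‖ * q ^ (2*(k : ℝ) + 2*s.re + 1)
          = ‖z‖ * ((q^2) ^ ((k:ℝ) + (2 * s.re + 1)/2)) := fun k => by
        rw [← Real.rpow_natCast q 2, ← Real.rpow_mul hq0.le]
        congr 1
        push_cast
        ring
      simp only [heq]
      simpa using (rpow_lin_tendsto (by positivity : 0 < q^2)
        (by nlinarith : q^2 < 1) ((2 * s.re + 1)/2)).const_mul ‖z‖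
    have h2 := h2t.eventually (eventually_le_nhds (by norm_num : (0:ℝ) < 1/4))
    filter_upwards [h1, h2] with k hk1 hk2
    have hid := qTerm_norm_succ hq0 hq1 hz s (k : ℤ)
    have hrk : ((k : ℤ) : ℝ) = (k : ℝ) := by push_cast; ring
    rw [hrk] at hid
    have hb1 : q ^ (((k:ℤ) : ℝ) + s.re + 1) ≤ 1/2 := by
      rw [hrk]; calc q ^ ((k:ℝ) + s.re + 1) = q ^ ((k:ℝ) + (s.re + 1)) := by ring_nf
        _ ≤ 1/2 := hk1
    have hlow : (1:ℝ)/2 ≤ ‖1 - (q:ℂ) ^ (((k:ℤ) : ℂ) + s + 1)‖ := by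
      have := norm_one_sub_q_ge hq0 s (k : ℤ)
      linarith
    have key : ‖qTerm q z s ((k:ℤ) + 1)‖ * (1/2)
        ≤ (1/4) * ‖qTerm q z s (k:ℤ)‖ := by
      calc ‖qTerm q z s ((k:ℤ) + 1)‖ * (1/2)
          ≤ ‖qTerm q z s ((k:ℤ) + 1)‖ * ‖1 - (q:ℂ) ^ (((k:ℤ) : ℂ) + s + 1)‖ := by
            gcongr
        _ = q ^ (2*(k : ℝ) + 2*s.re + 1) * ‖z‖ * ‖qTerm q z s (k:ℤ)‖ := hid
        _ ≤ (1/4) * ‖qTerm q z s (k:ℤ)‖ := by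
            have h4 : q ^ (2*(k : ℝ) + 2*s.re + 1) * ‖z‖ ≤ 1/4 := by
              rw [mul_comm]; exact hk2
            gcongr
    have hfin : ‖qTerm q z s ((k:ℤ) + 1)‖ ≤ 1/2 * ‖qTerm q z s (k:ℤ)‖ := by linarith
    have hcast : ((k+1 : ℕ) : ℤ) = (k : ℤ) + 1 := by push_cast; ring
    show ‖qTerm q z s ((k+1 : ℕ) : ℤ)‖ ≤ 1/2 * ‖qTerm q z s (k : ℤ)‖
    rw [hcast]; exact hfin
  · -- negative side
    refine summable_of_ratio_norm_eventually_le (r := 1/2) (by norm_num) ?_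
    have h3t : Tendsto (fun k : ℕ => 2/‖z‖ * q ^ ((k : ℝ) + (2 - s.re))) atTop (𝓝 0) := by
      simpa using (rpow_lin_tendsto hq0 hq1 (2 - s.re)).const_mul (2/‖z‖)
    have h3 := h3t.eventually (eventually_le_nhds (by norm_num : (0:ℝ) < 1/2))
    filter_upwards [h3, eventually_ge_atTop ⌈s.re⌉₊] with k hk3 hkσ
    set n : ℤ := -((k : ℤ) + 2) with hn
    have hid := qTerm_norm_succ hq0 hq1 hz s n
    have hrn : ((n : ℤ) : ℝ) = -((k : ℝ) + 2) := by rw [hn]; push_cast; ring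
    have hn1 : n + 1 = -((k : ℤ) + 1) := by rw [hn]; ring
    rw [hrn, hn1] at hid
    -- names
    set L := ‖qTerm q z s (-((k:ℤ) + 1))‖ with hL
    set R := ‖qTerm q z s n‖ with hR
    have hLnn : 0 ≤ L := norm_nonneg _
    -- upper bound on the 1 - q^... factor
    have hNup : ‖1 - (q : ℂ) ^ ((n : ℂ) + s + 1)‖ ≤ 2 * q ^ (s.re - ((k:ℝ) + 1)) := by
      have h1 := norm_one_sub_q_le hq0 s n
      rw [hrn] at h1
      have hexp : -((k:ℝ) + 2) + s.re + 1 = s.re - ((k:ℝ) + 1) := by ring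
      rw [hexp] at h1
      have hge1 : (1:ℝ) ≤ q ^ (s.re - ((k:ℝ)+1)) := by
        have hsk : s.re - ((k:ℝ)+1) ≤ 0 := by
          have h5 : s.re ≤ (⌈s.re⌉₊ : ℝ) := Nat.le_ceil _
          have hk' : ((⌈s.re⌉₊ : ℕ) : ℝ) ≤ (k:ℝ) := by exact_mod_cast hkσ
          linarith
        calc (1:ℝ) = q ^ (0:ℝ) := (Real.rpow_zero q).symm
          _ ≤ q ^ (s.re - ((k:ℝ)+1)) := Real.rpow_le_rpow_of_exponent_ge hq0 hq1.le hsk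
      linarith
    have hE : (0:ℝ) < q ^ (2 * -((k:ℝ) + 2) + 2 * s.re + 1) := Real.rpow_pos_of_pos hq0 _
    -- from hid : L * N = E * ‖z‖ * R
    have hRbound : R ≤ L * (2 * q ^ (s.re - ((k:ℝ) + 1)))
        / (q ^ (2 * -((k:ℝ) + 2) + 2 * s.re + 1) * ‖z‖) := by
      rw [le_div_iff₀ (by positivity)]
      calc R * (q ^ (2 * -((k:ℝ) + 2) + 2 * s.re + 1) * ‖z‖)
          = q ^ (2 * -((k:ℝ) + 2) + 2 * s.re + 1) * ‖z‖ * R := by ring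
        _ = L * ‖1 - (q : ℂ) ^ ((n : ℂ) + s + 1)‖ := hid.symm
        _ ≤ L * (2 * q ^ (s.re - ((k:ℝ) + 1))) := by gcongr
    have e1 : q ^ (s.re - ((k:ℝ) + 1)) / q ^ (2 * -((k:ℝ) + 2) + 2 * s.re + 1)
        = q ^ ((k:ℝ) + (2 - s.re)) := by
      rw [← Real.rpow_sub hq0]; congr 1; ring
    have hB0 : q ^ (2 * -((k:ℝ) + 2) + 2 * s.re + 1) ≠ 0 := hE.ne'
    have hz0 : ‖z‖ ≠ 0 := hznorm.ne'
    have hsimp : L * (2 * q ^ (s.re - ((k:ℝ) + 1)))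
        / (q ^ (2 * -((k:ℝ) + 2) + 2 * s.re + 1) * ‖z‖)
        = L * (2/‖z‖ * q ^ ((k:ℝ) + (2 - s.re))) := by
      rw [← e1]
      field_simp
    have hfin : R ≤ 1/2 * L := by
      rw [hsimp] at hRbound
      calc R ≤ L * (2/‖z‖ * q ^ ((k:ℝ) + (2 - s.re))) := hRbound
        _ ≤ L * (1/2) := by gcongr
        _ = 1/2 * L := by ring
    have hc2 : -(((k+1 : ℕ) : ℤ) + 1) = n := by rw [hn]; push_cast; ring
    show ‖qTerm q z s (-(((k+1 : ℕ) : ℤ) + 1))‖ ≤ 1/2 * ‖qTerm q z s (-((k : ℤ) + 1))‖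
    rw [hc2]; exact hfin

lemma qTerm_step {q : ℝ} (hq0 : 0 < q) (hq1 : q < 1) {z : ℂ} (hz : z ≠ 0) (s : ℂ) (n : ℤ) :
    qTerm q z s n = qTerm q ((q : ℂ) * z) s n
      - (q : ℂ) * z * qTerm q ((q : ℂ) ^ 2 * z) s (n - 1) := by
  have hq : (q : ℂ) ≠ 0 := Complex.ofReal_ne_zero.mpr hq0.ne'
  set w : ℂ := (n : ℂ) + s with hw
  -- powers of q*z and q^2*z
  have hqz : ((q : ℂ) * z) ^ w = (q : ℂ) ^ w * z ^ w := cpow_pos_mul hq0 hz w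
  have hq2z : ∀ c : ℂ, ((q : ℂ) ^ 2 * z) ^ c = (q : ℂ) ^ c * ((q : ℂ) ^ c * z ^ c) := by
    intro c
    rw [show ((q : ℂ) ^ 2 * z) = (q : ℂ) * ((q : ℂ) * z) by ring, cpow_pos_mul hq0
      (mul_ne_zero hq hz) c, cpow_pos_mul hq0 hz c]
  -- index cast for n - 1
  have hcast : (((n - 1 : ℤ) : ℂ)) = (n : ℂ) - 1 := by push_cast; ring
  have hsign : ((-1 : ℂ)) ^ (n - 1) = -(-1 : ℂ) ^ n := by
    rw [zpow_sub_one₀ (by norm_num : (-1:ℂ) ≠ 0)]; ring_nf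
  -- Pochhammer recurrence at a = q^w
  have hQw1 : (q : ℂ) ^ (w + 1) = (q : ℂ) ^ w * (q : ℂ) := by
    rw [Complex.cpow_add _ _ hq, Complex.cpow_one]
  have hP : qPochInf q ((q : ℂ) ^ w) = (1 - (q : ℂ) ^ w) * qPochInf q ((q : ℂ) ^ (w + 1)) := by
    rw [hQw1]; exact qPochInf_rec hq0 hq1 _
  have hQsq : (q : ℂ) ^ (w ^ 2)
      = (q : ℂ) ^ ((w - 1) ^ 2) * (q : ℂ) ^ (w - 1) * (q : ℂ) ^ (w - 1) * (q : ℂ) := by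
    rw [show w ^ 2 = (w - 1) ^ 2 + (w - 1) + (w - 1) + 1 by ring, Complex.cpow_add _ _ hq,
      Complex.cpow_add _ _ hq, Complex.cpow_add _ _ hq, Complex.cpow_one]
  have hzw : z ^ w = z ^ (w - 1) * z := by
    rw [show w = (w - 1) + 1 by ring, Complex.cpow_add _ _ hz, Complex.cpow_one]
    ring_nf
  simp only [qTerm, hcast, hsign]
  rw [show (n : ℂ) - 1 + s = w - 1 by rw [hw]; ring]
  rw [show w - 1 + 1 = w by ring]
  rw [← hw, hqz, hq2z, hP, hQsq, hzw]
  ring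

/-- for every complex `s`, the function `F_q(·;s)` satisfies the
q-difference equation `y(z) - y(qz) + q z y(q² z) = 0` on the cut plane. -/
theorem Fq_q_difference (q : ℝ) (hq0 : 0 < q) (hq1 : q < 1) (s : ℂ)
    (z : ℂ) (hz : z ∈ Complex.slitPlane) :
    Fq q z s - Fq q ((q : ℂ) * z) s + (q : ℂ) * z * Fq q ((q : ℂ) ^ 2 * z) s = 0 := by
  have hz0 : z ≠ 0 := Complex.slitPlane_ne_zero hz
  have hq : (q : ℂ) ≠ 0 := Complex.ofReal_ne_zero.mpr hq0.ne'
  have hqz0 : (q : ℂ) * z ≠ 0 := mul_ne_zero hq hz0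
  have hq2z0 : (q : ℂ) ^ 2 * z ≠ 0 := mul_ne_zero (pow_ne_zero 2 hq) hz0
  have hFq : ∀ w : ℂ, Fq q w s
      = Complex.exp (Real.pi * Complex.I * s)
        * ((∑' n : ℤ, qTerm q w s n) / qPochInf q (q : ℂ)) := by
    intro w
    have : Fq q w s = Complex.exp (Real.pi * Complex.I * s)
        * ∑' n : ℤ, qTerm q w s n / qPochInf q (q : ℂ) := rfl
    rw [this, tsum_div_const]
  have h1 : Summable (qTerm q ((q : ℂ) * z) s) := qTerm_summable hq0 hq1 hqz0 s
  have h2 : Summable (qTerm q ((q : ℂ) ^ 2 * z) s) := qTerm_summable hq0 hq1 hq2z0 s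
  have h2' : Summable (fun n : ℤ => qTerm q ((q : ℂ) ^ 2 * z) s (n - 1)) := by
    have := (Equiv.subRight (1 : ℤ)).summable_iff
      (f := qTerm q ((q : ℂ) ^ 2 * z) s) |>.mpr h2
    exact this
  have hshift : ∑' n : ℤ, qTerm q ((q : ℂ) ^ 2 * z) s (n - 1)
      = ∑' n : ℤ, qTerm q ((q : ℂ) ^ 2 * z) s n := by
    have := (Equiv.subRight (1 : ℤ)).tsum_eq (qTerm q ((q : ℂ) ^ 2 * z) s)
    simpa using this
  have key : ∑' n : ℤ, qTerm q z s n
      = (∑' n : ℤ, qTerm q ((q : ℂ) * z) s n)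
        - (q : ℂ) * z * ∑' n : ℤ, qTerm q ((q : ℂ) ^ 2 * z) s n := by
    calc ∑' n : ℤ, qTerm q z s n
        = ∑' n : ℤ, (qTerm q ((q : ℂ) * z) s n
            - (q : ℂ) * z * qTerm q ((q : ℂ) ^ 2 * z) s (n - 1)) :=
          tsum_congr fun n => qTerm_step hq0 hq1 hz0 s n
      _ = (∑' n : ℤ, qTerm q ((q : ℂ) * z) s n)
            - ∑' n : ℤ, (q : ℂ) * z * qTerm q ((q : ℂ) ^ 2 * z) s (n - 1) :=
          Summable.tsum_sub h1 (h2'.mul_left _)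
      _ = (∑' n : ℤ, qTerm q ((q : ℂ) * z) s n)
            - (q : ℂ) * z * ∑' n : ℤ, qTerm q ((q : ℂ) ^ 2 * z) s (n - 1) := by
          rw [tsum_mul_left]
      _ = _ := by rw [hshift]
  rw [hFq z, hFq ((q : ℂ) * z), hFq ((q : ℂ) ^ 2 * z), key]
  ring
end

section
/- If a sequence of polynomials s_n in 1/t^2 is uniformly bounded by M on the circle |t| = \rho and satisfies s_{n+1}(q^{1/2}t) = (1 - q^n/t^2)s_n(t) - t^{-2}c(q,n)s_{n-1}(q^{-1/2}t) with |c(q,n)| \leq K, then for every k \geq 1, \max_{|t| \geq q^{k/2}\rho} |s_n(t)| \leq M \prod_{j=1}^k (1 + (1+K)/(\rho^2 q^{j-1})) for all n \geq k+1; consequently (s_n) is uniformly bounded on each compact subset of \mathbb{C} \setminus \{0\} (together with boundedness near \infty by the maximum principle). -/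
/-- The polynomials `p_n` with `s_n(u) = p_n(1/u²)`. -/
noncomputable def sPoly (q : ℝ) (c : ℕ → ℂ) : ℕ → Polynomial ℂ
  | 0 => 1
  | 1 => 1 - Polynomial.C (q : ℂ) * Polynomial.X
  | (n + 2) =>
      (1 - Polynomial.C ((q : ℂ) ^ (n + 2)) * Polynomial.X) *
          (sPoly q c (n + 1)).comp (Polynomial.C (q : ℂ) * Polynomial.X)
        - Polynomial.C ((q : ℂ) * c (n + 1)) * Polynomial.X *
          (sPoly q c n).comp (Polynomial.C ((q : ℂ) ^ 2) * Polynomial.X)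

lemma sFun_eq_eval (q : ℝ) (hq : 0 < q) (c : ℕ → ℂ) :
    ∀ (n : ℕ) (u : ℂ), sFun q c n u = (sPoly q c n).eval (u⁻¹ ^ 2)
  | 0, u => by simp [sFun, sPoly]
  | 1, u => by
      simp only [sFun, sPoly, Polynomial.eval_sub, Polynomial.eval_one, Polynomial.eval_mul,
        Polynomial.eval_C, Polynomial.eval_X, div_eq_mul_inv, inv_pow]
  | (n + 2), u => by
      have h1 := sFun_eq_eval q hq c (n + 1) (((Real.sqrt q : ℂ))⁻¹ * u)
      have h2 := sFun_eq_eval q hq c n (((q : ℂ))⁻¹ * u)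
      have hs : (((Real.sqrt q : ℂ))⁻¹ * u)⁻¹ ^ 2 = (q : ℂ) * u⁻¹ ^ 2 := by
        rw [mul_inv, mul_pow, inv_inv]
        norm_cast
        rw [Real.sq_sqrt hq.le]
      have hq2 : (((q : ℂ))⁻¹ * u)⁻¹ ^ 2 = (q : ℂ) ^ 2 * u⁻¹ ^ 2 := by
        rw [mul_inv, mul_pow, inv_inv]
      rw [hs] at h1
      rw [hq2] at h2
      show (1 - (q : ℂ) ^ (n + 2) / u ^ 2) * sFun q c (n + 1) (((Real.sqrt q : ℂ))⁻¹ * u)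
        - (q : ℂ) / u ^ 2 * c (n + 1) * sFun q c n (((q : ℂ))⁻¹ * u)
        = (sPoly q c (n + 2)).eval (u⁻¹ ^ 2)
      rw [h1, h2, sPoly]
      simp only [Polynomial.eval_sub, Polynomial.eval_mul, Polynomial.eval_one,
        Polynomial.eval_comp, Polynomial.eval_C, Polynomial.eval_X, Polynomial.eval_pow,
        div_eq_mul_inv, inv_pow]
      ring

/-- Maximum modulus principle for polynomials in `1/u²` on the exterior of a circle. -/
lemma poly_exterior_bound (p : Polynomial ℂ) {r C : ℝ} (hr : 0 < r)
    (h : ∀ v : ℂ, ‖v‖ = r → ‖p.eval (v⁻¹ ^ 2)‖ ≤ C) :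
    ∀ u : ℂ, r ≤ ‖u‖ → ‖p.eval (u⁻¹ ^ 2)‖ ≤ C := by
  intro u hu
  have hu0 : u ≠ 0 := by
    intro h0
    rw [h0] at hu; simp at hu; linarith
  set f : ℂ → ℂ := fun z => p.eval (z ^ 2) with hf
  have hd : Differentiable ℂ f := by
    apply Differentiable.comp (Polynomial.differentiable p)
    exact fun z => (differentiableAt_id.pow 2)
  have hr' : (0 : ℝ) < r⁻¹ := inv_pos.mpr hr
  have key : ‖f u⁻¹‖ ≤ C := by
    apply Complex.norm_le_of_forall_mem_frontier_norm_le (U := Metric.ball (0 : ℂ) r⁻¹)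
      Metric.isBounded_ball hd.diffContOnCl
    · intro z hz
      rw [frontier_ball (0 : ℂ) (ne_of_gt hr')] at hz
      have hz' : ‖z‖ = r⁻¹ := by simpa [Complex.dist_eq] using hz
      have hz0 : z ≠ 0 := by
        intro h0; rw [h0] at hz'; simp at hz'; rw [← hz'] at hr'; simp at hr'
      have hv : ‖z⁻¹‖ = r := by
        rw [norm_inv, hz', inv_inv]
      have := h z⁻¹ hv
      simpa [hf, inv_inv] using this
    · rw [closure_ball (0 : ℂ) (ne_of_gt hr')]
      simp only [Metric.mem_closedBall, Complex.dist_eq, sub_zero]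
      rw [norm_inv]
      exact inv_anti₀ hr hu
  simpa [hf] using key

/-- Lemma 3.1: if the `s_n` are uniformly bounded by `M` on `|t| = ρ`
and `|c(q,n)| ≤ K`, then for every `k ≥ 1`,
`max_{|t| ≥ q^{k/2}ρ} |s_n(t)| ≤ M ∏_{j=1}^k (1 + (1+K)/(ρ² q^{j-1}))` for all
`n ≥ k+1`; consequently `(s_n)` is uniformly bounded on every compact subset of
`ℂ \ {0}`. -/
theorem sFun_normal_family (q : ℝ) (hq0 : 0 < q) (hq1 : q < 1)
    (ρ M K : ℝ) (hρ : 0 < ρ) (hM : 0 < M) (hK : 0 < K)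
    (c : ℕ → ℂ) (hc : ∀ n, ‖c n‖ ≤ K)
    (hbound : ∀ n : ℕ, ∀ t : ℂ, ‖t‖ = ρ → ‖sFun q c n t‖ ≤ M) :
    (∀ k : ℕ, 1 ≤ k → ∀ n : ℕ, k + 1 ≤ n → ∀ t : ℂ,
      (Real.sqrt q) ^ k * ρ ≤ ‖t‖ →
        ‖sFun q c n t‖
          ≤ M * ∏ j ∈ Finset.range k, (1 + (1 + K) / (ρ ^ 2 * q ^ j))) ∧
    ∀ C : Set ℂ, IsCompact C → (0 : ℂ) ∉ C →
      ∃ B : ℝ, ∀ n : ℕ, ∀ t ∈ C, ‖sFun q c n t‖ ≤ B := by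
  set s := Real.sqrt q with hsdef
  have hs0 : 0 < s := Real.sqrt_pos.mpr hq0
  have hs1 : s < 1 := by
    rw [hsdef, show (1 : ℝ) = Real.sqrt 1 by simp]
    exact Real.sqrt_lt_sqrt hq0.le hq1
  have hsq : s ^ 2 = q := Real.sq_sqrt hq0.le
  have hM1 : 1 ≤ M := by
    have := hbound 0 (ρ : ℂ) (by simp [abs_of_pos hρ])
    simpa [sFun] using this
  -- each factor is at least one
  have hfac : ∀ j : ℕ, (1 : ℝ) ≤ 1 + (1 + K) / (ρ ^ 2 * q ^ j) := by
    intro j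
    have : 0 ≤ (1 + K) / (ρ ^ 2 * q ^ j) :=
      div_nonneg (by linarith) (by positivity)
    linarith
  have hprod : ∀ k : ℕ, (1 : ℝ) ≤ ∏ j ∈ Finset.range k, (1 + (1 + K) / (ρ ^ 2 * q ^ j)) :=
    fun k => by
      calc (1 : ℝ) = ∏ _j ∈ Finset.range k, 1 := by simp
        _ ≤ _ := Finset.prod_le_prod (fun j _ => zero_le_one) (fun j _ => hfac j)
  -- The key claim, for every k and every n
  have Q : ∀ k : ℕ, ∀ n : ℕ, ∀ t : ℂ, s ^ k * ρ ≤ ‖t‖ →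
      ‖sFun q c n t‖
        ≤ M * ∏ j ∈ Finset.range k, (1 + (1 + K) / (ρ ^ 2 * q ^ j)) := by
    intro k
    induction k with
    | zero =>
      intro n t ht
      simp only [pow_zero, one_mul] at ht
      simp only [Finset.range_zero, Finset.prod_empty, mul_one]
      have := poly_exterior_bound (sPoly q c n) hρ
        (fun v hv => by rw [← sFun_eq_eval q hq0 c n v]; exact hbound n v hv) t ht
      rwa [← sFun_eq_eval q hq0 c n t] at this
    | succ k IH =>
      intro n t ht
      have htpos : 0 < ‖t‖ := lt_of_lt_of_le (by positivity) ht
      have ht2 : q ^ (k + 1) * ρ ^ 2 ≤ ‖t‖ ^ 2 := by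
        have := pow_le_pow_left₀ (by positivity) ht 2
        calc q ^ (k + 1) * ρ ^ 2 = (s ^ (k + 1) * ρ) ^ 2 := by
              rw [mul_pow, ← pow_mul, mul_comm (k+1) 2, pow_mul, hsq]
          _ ≤ ‖t‖ ^ 2 := this
      have ht2pos : (0 : ℝ) < ‖t‖ ^ 2 := by positivity
      set Mk := M * ∏ j ∈ Finset.range k, (1 + (1 + K) / (ρ ^ 2 * q ^ j)) with hMk
      have hMkpos : 0 < Mk := by
        have := hprod k; nlinarith
      have hMk1 : (1 : ℝ) ≤ Mk := by
        have := hprod k; nlinarith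
      have hstep : M * ∏ j ∈ Finset.range (k + 1), (1 + (1 + K) / (ρ ^ 2 * q ^ j))
          = Mk * (1 + (1 + K) / (ρ ^ 2 * q ^ k)) := by
        rw [hMk, Finset.prod_range_succ, mul_assoc]
      rw [hstep]
      -- bound `q^m / |t|^2` for any `m ≥ 1`
      have hdiv : ∀ m : ℕ, 1 ≤ m → q ^ m / ‖t‖ ^ 2 ≤ 1 / (ρ ^ 2 * q ^ k) := by
        intro m hm
        have h1 : q ^ m ≤ q := by
          calc q ^ m ≤ q ^ 1 := pow_le_pow_of_le_one hq0.le hq1.le hm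
            _ = q := pow_one q
        have h2 : q ^ m / ‖t‖ ^ 2 ≤ q / (q ^ (k + 1) * ρ ^ 2) :=
          div_le_div₀ hq0.le h1 (by positivity) ht2
        calc q ^ m / ‖t‖ ^ 2 ≤ q / (q ^ (k + 1) * ρ ^ 2) := h2
          _ = 1 / (ρ ^ 2 * q ^ k) := by
              rw [pow_succ]
              field_simp
      match n with
      | 0 =>
        have : ‖sFun q c 0 t‖ = 1 := by simp [sFun]
        rw [this]
        have h1 : (1 : ℝ) ≤ 1 + (1 + K) / (ρ ^ 2 * q ^ k) := hfac k
        nlinarith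
      | 1 =>
        have habs : ‖sFun q c 1 t‖ ≤ 1 + q / ‖t‖ ^ 2 := by
          show ‖1 - (q : ℂ) / t ^ 2‖ ≤ _
          calc ‖1 - (q : ℂ) / t ^ 2‖
              ≤ ‖(1 : ℂ)‖ + ‖(q : ℂ) / t ^ 2‖ := by
                exact (norm_sub_le _ _)
            _ = 1 + q / ‖t‖ ^ 2 := by
                rw [norm_one, norm_div, norm_pow, Complex.norm_of_nonneg hq0.le]
        have h1 : q / ‖t‖ ^ 2 ≤ 1 / (ρ ^ 2 * q ^ k) := by
          simpa using hdiv 1 le_rfl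
        have h2 : (1 : ℝ) / (ρ ^ 2 * q ^ k) ≤ (1 + K) / (ρ ^ 2 * q ^ k) := by
          gcongr
          linarith
        have h3 : (1 : ℝ) ≤ Mk := hMk1
        have h4 : 0 ≤ (1 + K) / (ρ ^ 2 * q ^ k) := div_nonneg (by linarith) (by positivity)
        nlinarith [habs]
      | (m + 2) =>
        -- use IH at the two previous levels
        have hIH1 : ‖sFun q c (m + 1) (((s : ℂ))⁻¹ * t)‖ ≤ Mk := by
          apply IH
          rw [norm_mul, norm_inv, Complex.norm_of_nonneg hs0.le]
          calc s ^ k * ρ = s⁻¹ * (s ^ (k + 1) * ρ) := by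
                field_simp
                ring
            _ ≤ s⁻¹ * ‖t‖ := mul_le_mul_of_nonneg_left ht (by positivity)
        have hIH2 : ‖sFun q c m (((q : ℂ))⁻¹ * t)‖ ≤ Mk := by
          apply IH
          rw [norm_mul, norm_inv, Complex.norm_of_nonneg hq0.le]
          have hqs : q ≤ s := by nlinarith [hsq, hs0.le, hs1]
          have hkey : q * (s ^ k * ρ) ≤ s ^ (k + 1) * ρ := by
            have h0 : (0 : ℝ) < s ^ k * ρ := by positivity
            calc q * (s ^ k * ρ) ≤ s * (s ^ k * ρ) :=
                  mul_le_mul_of_nonneg_right hqs h0.le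
              _ = s ^ (k + 1) * ρ := by ring
          calc s ^ k * ρ = q⁻¹ * (q * (s ^ k * ρ)) := by field_simp
            _ ≤ q⁻¹ * (s ^ (k + 1) * ρ) := mul_le_mul_of_nonneg_left hkey (by positivity)
            _ ≤ q⁻¹ * ‖t‖ := mul_le_mul_of_nonneg_left ht (by positivity)
        have expand : sFun q c (m + 2) t
            = (1 - (q : ℂ) ^ (m + 2) / t ^ 2) * sFun q c (m + 1) (((s : ℂ))⁻¹ * t)
              - (q : ℂ) / t ^ 2 * c (m + 1) * sFun q c m (((q : ℂ))⁻¹ * t) := rfl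
        rw [expand]
        have habs1 : ‖1 - (q : ℂ) ^ (m + 2) / t ^ 2‖
            ≤ 1 + 1 / (ρ ^ 2 * q ^ k) := by
          calc ‖1 - (q : ℂ) ^ (m + 2) / t ^ 2‖
              ≤ ‖(1 : ℂ)‖ + ‖(q : ℂ) ^ (m + 2) / t ^ 2‖ :=
                norm_sub_le _ _
            _ = 1 + q ^ (m + 2) / ‖t‖ ^ 2 := by
                rw [norm_one, norm_div, norm_pow, norm_pow, Complex.norm_of_nonneg hq0.le]
            _ ≤ 1 + 1 / (ρ ^ 2 * q ^ k) := by
                have := hdiv (m + 2) (by omega); linarith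
        have habs2 : ‖(q : ℂ) / t ^ 2 * c (m + 1)‖
            ≤ K / (ρ ^ 2 * q ^ k) := by
          rw [norm_mul, norm_div, norm_pow, Complex.norm_of_nonneg hq0.le]
          have h1 : q / ‖t‖ ^ 2 ≤ 1 / (ρ ^ 2 * q ^ k) := by
            simpa using hdiv 1 le_rfl
          have h2 : ‖c (m + 1)‖ ≤ K := hc (m + 1)
          have h3 : 0 ≤ q / ‖t‖ ^ 2 := by positivity
          have h4 : 0 ≤ ‖c (m + 1)‖ := norm_nonneg _
          calc q / ‖t‖ ^ 2 * ‖c (m + 1)‖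
              ≤ 1 / (ρ ^ 2 * q ^ k) * K := by
                apply mul_le_mul h1 h2 h4 (by positivity)
            _ = K / (ρ ^ 2 * q ^ k) := by ring
        calc ‖(1 - (q : ℂ) ^ (m + 2) / t ^ 2) * sFun q c (m + 1) (((s : ℂ))⁻¹ * t)
              - (q : ℂ) / t ^ 2 * c (m + 1) * sFun q c m (((q : ℂ))⁻¹ * t)‖
            ≤ ‖(1 - (q : ℂ) ^ (m + 2) / t ^ 2) * sFun q c (m + 1) (((s : ℂ))⁻¹ * t)‖
              + ‖(q : ℂ) / t ^ 2 * c (m + 1) * sFun q c m (((q : ℂ))⁻¹ * t)‖ :=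
              norm_sub_le _ _
          _ = ‖1 - (q : ℂ) ^ (m + 2) / t ^ 2‖
                * ‖sFun q c (m + 1) (((s : ℂ))⁻¹ * t)‖
              + ‖(q : ℂ) / t ^ 2 * c (m + 1)‖
                * ‖sFun q c m (((q : ℂ))⁻¹ * t)‖ := by
              rw [norm_mul, norm_mul]
          _ ≤ (1 + 1 / (ρ ^ 2 * q ^ k)) * Mk + K / (ρ ^ 2 * q ^ k) * Mk := by
              apply add_le_add
              · exact mul_le_mul habs1 hIH1 (norm_nonneg _) (by positivity)
              · exact mul_le_mul habs2 hIH2 (norm_nonneg _) (by positivity)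
          _ = Mk * (1 + (1 + K) / (ρ ^ 2 * q ^ k)) := by
              field_simp
              ring
  constructor
  · intro k _ n _ t ht
    exact Q k n t ht
  · intro C hC hC0
    rcases Set.eq_empty_or_nonempty C with rfl | hne
    · exact ⟨0, by simp⟩
    obtain ⟨t₀, ht₀C, ht₀⟩ := hC.exists_isMinOn hne continuous_norm.continuousOn
    have ht₀pos : 0 < ‖t₀‖ := by
      rcases eq_or_ne t₀ 0 with rfl | h
      · exact absurd ht₀C hC0
      · exact norm_pos_iff.mpr h
    obtain ⟨k, hk⟩ := exists_pow_lt_of_lt_one (div_pos ht₀pos hρ) hs1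
    refine ⟨M * ∏ j ∈ Finset.range k, (1 + (1 + K) / (ρ ^ 2 * q ^ j)), fun n t htC => ?_⟩
    apply Q k n t
    have h1 : s ^ k * ρ ≤ ‖t₀‖ := by
      have h2 : s ^ k < ‖t₀‖ / ρ := hk
      calc s ^ k * ρ ≤ ‖t₀‖ / ρ * ρ := by nlinarith
        _ = ‖t₀‖ := by field_simp
    exact h1.trans (ht₀ htC)
end
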